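/- Let V ∈ ℂ^{n×k} have Gram matrix G = V*V and affine hull A = {Vx : Σxᵢ = 1}. The squared length γ* of the shortest vector in A satisfies γ* = max{γ ∈ ℝ : G − γ·𝟏𝟏ᵀ ⪰ 0}, where 𝟏𝟏ᵀ is the all-ones rank-one matrix and ⪰ 0 denotes positive semidefiniteness. -/

import Mathlib

open Matrix in
open scoped ComplexOrder in
theorem quadform (n k : ℕ) (V : Matrix (Fin n) (Fin k) ℂ)
    (γ : ℝ) (z : Fin k → ℂ) :
    star z ⬝ᵥ ((Vᴴ * V - γ • Matrix.of fun _ _ : Fin k => (1 : ℂ))).mulVec z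
      = ((∑ i, Complex.normSq ((V *ᵥ z) i) - γ * Complex.normSq (∑ i, z i) : ℝ) : ℂ) := by
  rw [sub_mulVec, dotProduct_sub]
  have h1 : star z ⬝ᵥ (Vᴴ * V) *ᵥ z = star (V *ᵥ z) ⬝ᵥ (V *ᵥ z) := by
    rw [← mulVec_mulVec, dotProduct_mulVec, vecMul_conjTranspose, star_star]
  have h2 : star z ⬝ᵥ (γ • Matrix.of fun _ _ : Fin k => (1 : ℂ)) *ᵥ z
      = (γ : ℂ) * (star (∑ i, z i) * (∑ i, z i)) := by
    simp only [mulVec, dotProduct, Pi.star_apply, Matrix.smul_apply, of_apply, smul_eq_mul,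
      Finset.mul_sum, Finset.sum_mul, star_sum]
    rw [Finset.sum_comm]
    apply Finset.sum_congr rfl; intro i _
    apply Finset.sum_congr rfl; intro j _
    simp only [Complex.real_smul, mul_one]
    ring
  rw [h1, h2]
  simp only [dotProduct, Pi.star_apply, Complex.star_def]
  push_cast [Complex.normSq_eq_conj_mul_self]
  ring

open Matrix in
theorem dot_re (m : ℕ) (w : Fin m → ℂ) :
    (star w ⬝ᵥ w).re = ∑ i, Complex.normSq (w i) := by
  simp [dotProduct, Complex.normSq_eq_conj_mul_self, Complex.re_sum, Complex.normSq_apply]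

open Matrix in
open scoped ComplexOrder in
/-- Let `V ∈ ℂ^{n×k}` (with `k ≥ 1`) have Gram matrix `G = Vᴴ V` and affine hull
`A = {Vx : ∑ xᵢ = 1}`.  The squared length `γ*` of the shortest vector in `A` equals
`max {γ ∈ ℝ : G - γ·𝟏𝟏ᵀ ⪰ 0}` (the maximum is attained). -/
theorem stmt_9 (n k : ℕ) (hk : 0 < k) (V : Matrix (Fin n) (Fin k) ℂ)
    (G : Matrix (Fin k) (Fin k) ℂ) (hG : G = Vᴴ * V)
    (γstar : ℝ)
    (hγ : γstar = sInf {r : ℝ | ∃ x : Fin k → ℂ,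
      (∑ i, x i) = 1 ∧ r = (star (V.mulVec x) ⬝ᵥ V.mulVec x).re}) :
    IsGreatest {γ : ℝ | (G - γ • Matrix.of fun _ _ : Fin k => (1 : ℂ)).PosSemidef} γstar := by
  subst hG
  set S : Set ℝ := {r : ℝ | ∃ x : Fin k → ℂ,
      (∑ i, x i) = 1 ∧ r = (star (V.mulVec x) ⬝ᵥ V.mulVec x).re} with hS
  have hne : S.Nonempty := by
    refine ⟨_, Pi.single (⟨0, hk⟩ : Fin k) (1 : ℂ), ?_, rfl⟩
    simp
  have hlb : ∀ r ∈ S, (0 : ℝ) ≤ r := by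
    rintro r ⟨x, hx1, rfl⟩
    rw [dot_re]
    exact Finset.sum_nonneg fun i _ => Complex.normSq_nonneg _
  have hbdd : BddBelow S := ⟨0, hlb⟩
  constructor
  · refine posSemidef_iff_dotProduct_mulVec.mpr ⟨?_, fun z => ?_⟩
    · refine (isHermitian_conjTranspose_mul_self V).sub ?_
      ext i j
      simp [Matrix.conjTranspose_apply, Matrix.IsHermitian]
    · rw [quadform, Complex.zero_le_real]
      by_cases hs : (∑ i, z i) = 0
      · simp only [hs, Complex.normSq_zero, mul_zero, sub_zero]
        exact Finset.sum_nonneg fun i _ => Complex.normSq_nonneg _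
      · set s := ∑ i, z i with hsdef
        have hsn : 0 < Complex.normSq s := Complex.normSq_pos.mpr hs
        have hmem : Complex.normSq s⁻¹ * ∑ i, Complex.normSq ((V *ᵥ z) i) ∈ S := by
          refine ⟨s⁻¹ • z, ?_, ?_⟩
          · have h0 : ∑ i, (s⁻¹ • z) i = s⁻¹ * ∑ i, z i := by
              simp [Finset.mul_sum]
            rw [h0, ← hsdef, inv_mul_cancel₀ hs]
          · rw [dot_re, Matrix.mulVec_smul]
            simp [Complex.normSq_mul, Finset.mul_sum]
        have h1 : γstar ≤ Complex.normSq s⁻¹ * ∑ i, Complex.normSq ((V *ᵥ z) i) :=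
          hγ ▸ csInf_le hbdd hmem
        rw [map_inv₀] at h1
        rw [sub_nonneg]
        calc γstar * Complex.normSq s
            ≤ ((Complex.normSq s)⁻¹ * ∑ i, Complex.normSq ((V *ᵥ z) i)) * Complex.normSq s :=
              mul_le_mul_of_nonneg_right h1 hsn.le
          _ = ∑ i, Complex.normSq ((V *ᵥ z) i) := by field_simp
  · intro γ hγmem
    rw [hγ]
    apply le_csInf hne
    rintro r ⟨x, hx1, rfl⟩
    have := (posSemidef_iff_dotProduct_mulVec.mp hγmem).2 x
    rw [quadform, Complex.zero_le_real, hx1] at this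
    simp only [Complex.normSq_one, mul_one, sub_nonneg] at this
    rw [dot_re]
    exact this
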